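/- arXiv:2412.10066 — 2 statements merged into one kernel-verified Lean document; each statement's English description precedes it below -/
import Mathlib

section
/- Let A be a congruence class all of whose constrained terms carry the same constraint, lying in a set Π of classes for which M is Π-closed for some ground term α ∈ M, and assume gnd_M(E) ⊨ sσ ≈ tσ for all substitutions σ grounding for A and all {sσ, tσ} ⊆ Aσ. Then gnd_M(E) ⊨ sσ ≈ tσ for all substitutions σ grounding for norm(A) and all {sσ, tσ} ⊆ norm(A)σ. -/
namespace NGCC

inductive Tm (F : Type) : Type
  | var : ℕ → Tm F
  | app : F → List (Tm F) → Tm F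

instance {F : Type} : Inhabited (Tm F) := ⟨Tm.var 0⟩

namespace Tm
variable {F : Type}

def subst (σ : ℕ → Tm F) : Tm F → Tm F
  | var x => σ x
  | app f ts => app f (ts.attach.map fun t => t.1.subst σ)
  decreasing_by simp only [app.sizeOf_spec]; have h := List.sizeOf_lt_of_mem t.2; omega

def varsList : Tm F → List ℕ
  | var x => [x]
  | app _ ts => (ts.attach.map fun t => t.1.varsList).flatten
  decreasing_by simp only [app.sizeOf_spec]; have h := List.sizeOf_lt_of_mem t.2; omega

def varsIn (t : Tm F) : Set ℕ := {x | x ∈ t.varsList}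

def Ground (t : Tm F) : Prop := t.varsList = []

def size : Tm F → ℕ
  | var _ => 1
  | app _ ts => 1 + (ts.attach.map fun t => t.1.size).sum
  decreasing_by simp only [app.sizeOf_spec]; have h := List.sizeOf_lt_of_mem t.2; omega

def count (x : ℕ) : Tm F → ℕ
  | var y => if y = x then 1 else 0
  | app _ ts => (ts.attach.map fun t => count x t.1).sum
  decreasing_by simp only [app.sizeOf_spec]; have h := List.sizeOf_lt_of_mem t.2; omega

def eval {α : Type} (I : F → List α → α) (v : ℕ → α) : Tm F → α
  | var x => v x
  | app f ts => I f (ts.attach.map fun t => t.1.eval I v)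
  decreasing_by simp only [app.sizeOf_spec]; have h := List.sizeOf_lt_of_mem t.2; omega

end Tm


abbrev Subst (F : Type) := ℕ → Tm F

def Subst.dom {F : Type} (σ : Subst F) : Set ℕ := {x | σ x ≠ Tm.var x}

def Subst.comp {F : Type} (σ δ : Subst F) : Subst F := fun x => (σ x).subst δ

structure CTerm (F : Type) where
  constr : Set (Tm F)
  term : Tm F

abbrev CClass (F : Type) := Set (CTerm F)

variable {F : Type}

/-- Application of a substitution to a constraint (set of atoms `u ∈ M`). -/
def substConstr (Γ : Set (Tm F)) (σ : Subst F) : Set (Tm F) := (fun u => u.subst σ) '' Γ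

def CTerm.subst (ct : CTerm F) (σ : Subst F) : CTerm F :=
  ⟨substConstr ct.constr σ, ct.term.subst σ⟩

def substClass (A : CClass F) (σ : Subst F) : CClass F := (fun ct => ct.subst σ) '' A

/-- `Γσ` is true: every atom of `Γσ` belongs to `M`. -/
def ConstrHolds (M : Set (Tm F)) (Γ : Set (Tm F)) (σ : Subst F) : Prop :=
  substConstr Γ σ ⊆ M

/-- Satisfiability of a constraint with respect to `M`. -/
def ConstrSat (M : Set (Tm F)) (Γ : Set (Tm F)) : Prop :=
  ∃ σ : Subst F, ConstrHolds M Γ σ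

/-- `σ` is grounding for the class `A` (for all its constrained terms). -/
def GroundingForClass (σ : Subst F) (A : CClass F) : Prop :=
  ∀ ct ∈ A, (ct.term.subst σ).Ground ∧ ∀ u ∈ ct.constr, (u.subst σ).Ground

/-- Separating variables of a class. -/
def sepVars (A : CClass F) : Set ℕ := ⋂ ct ∈ A, (CTerm.term ct).varsIn

/-- All variables of the terms of a class. -/
def termVars (A : CClass F) : Set ℕ := ⋃ ct ∈ A, (CTerm.term ct).varsIn

/-- Free variables of a class. -/
def freeVars (A : CClass F) : Set ℕ := termVars A \ sepVars A

/-- All variables occurring in a class (terms and constraints). -/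
def varsAll (A : CClass F) : Set ℕ :=
  ⋃ ct ∈ A, ((CTerm.term ct).varsIn ∪ ⋃ u ∈ CTerm.constr ct, u.varsIn)

/-- `gnd'(A)`. -/
def gnd' (M : Set (Tm F)) (A : CClass F) : Set (CClass F) :=
  { B | ∃ σ : Subst F, Subst.dom σ = sepVars A ∧ (∀ x ∈ Subst.dom σ, (σ x).Ground) ∧
      B = { ct' | ∃ ct ∈ A, ConstrSat M (substConstr (CTerm.constr ct) σ) ∧ ct' = ct.subst σ } }

/-- `gnd(A)`: sets of ground terms. -/
def gnd (M : Set (Tm F)) (A : CClass F) : Set (Set (Tm F)) :=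
  { S | ∃ B ∈ gnd' M A,
      S = { t | ∃ σ : Subst F, GroundingForClass σ B ∧
              ∃ ct ∈ B, ConstrHolds M (CTerm.constr ct) σ ∧ t = (CTerm.term ct).subst σ } }

/-- The elements of `gnd(A)` regarded as classes of constrained ground terms. -/
def gndCl (M : Set (Tm F)) (A : CClass F) : Set (CClass F) :=
  { S | ∃ B ∈ gnd' M A,
      S = { ct' | ∃ σ : Subst F, GroundingForClass σ B ∧
              ∃ ct ∈ B, ConstrHolds M (CTerm.constr ct) σ ∧ ct' = ct.subst σ } }

/-- `B` subsumes `A`. -/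
def Subsumes (M : Set (Tm F)) (B A : CClass F) : Prop :=
  ∀ A' ∈ gnd M A, ∃ B' ∈ gnd M B, A' ⊆ B'

/-- `A` is `M`-constrained: the atom `sᵢ ∈ M` occurs in `Γᵢ` for each `Γᵢ ∥ sᵢ ∈ A`. -/
def MConstrained (A : CClass F) : Prop := ∀ ct ∈ A, CTerm.term ct ∈ CTerm.constr ct

/-- `ρ` is a renaming of the free variables of `A` to fresh variables. -/
def IsNormRenaming (A : CClass F) (ρ : Subst F) : Prop :=
  (∀ x, ∃ y, ρ x = Tm.var y) ∧ (∀ x, x ∉ freeVars A → ρ x = Tm.var x) ∧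
  (∀ x ∈ freeVars A, ∀ x' ∈ freeVars A, ρ x = ρ x' → x = x') ∧
  (∀ x ∈ freeVars A, ∀ y, ρ x = Tm.var y → y ∉ varsAll A)

/-- The normal class `norm(A)` for the renaming `ρ`. -/
def normC (A : CClass F) (ρ : Subst F) : CClass F :=
  { ct' | ∃ ct ∈ A, ct' = ⟨CTerm.constr ct ∪ substConstr (CTerm.constr ct) ρ, CTerm.term ct⟩ } ∪
  { ct' | ∃ ct ∈ A, ((CTerm.term ct).varsIn ∩ freeVars A).Nonempty ∧
      ct' = ⟨CTerm.constr ct ∪ substConstr (CTerm.constr ct) ρ, (CTerm.term ct).subst ρ⟩ }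

/-- `Aμ` for a grounding substitution `μ`: the set of ground terms
`{sμ | Γ ∥ s ∈ A and Γμ true}`. -/
def applyClass (M : Set (Tm F)) (A : CClass F) (μ : Subst F) : Set (Tm F) :=
  { t | ∃ ct ∈ A, ConstrHolds M (CTerm.constr ct) μ ∧ t = (CTerm.term ct).subst μ }

/-- Subterm relation. -/
inductive Subterm {F : Type} : Tm F → Tm F → Prop
  | refl (t : Tm F) : Subterm t t
  | app {s t : Tm F} (f : F) (ts : List (Tm F)) : t ∈ ts → Subterm s t → Subterm s (Tm.app f ts)

/-- `s` occurs as a (sub)term in `Π`. -/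
def OccursIn (s : Tm F) (P : Set (CClass F)) : Prop :=
  ∃ A ∈ P, ∃ ct ∈ A, Subterm s (CTerm.term ct) ∨ ∃ u ∈ CTerm.constr ct, Subterm s u

/-- `M` is `Π`-closed for the ground term `t`. -/
def PiClosed (M : Set (Tm F)) (P : Set (CClass F)) (t : Tm F) : Prop :=
  ∀ s, OccursIn s P → ∀ σ : Subst F, s.subst σ ∈ M →
    ∀ δ : Subst F, (∀ x, σ x ≠ δ x → δ x = t) → s.subst δ ∈ M

/-- Semantic equational consequence: every model of the (implicitly universally
quantified) equations is a model of `s ≈ t`. -/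
def Entails (Eqs : Set (Tm F × Tm F)) (s t : Tm F) : Prop :=
  ∀ (α : Type) (_ : Nonempty α) (I : F → List α → α) (v : ℕ → α),
    (∀ e ∈ Eqs, ∀ w : ℕ → α, Tm.eval I w e.1 = Tm.eval I w e.2) →
    Tm.eval I v s = Tm.eval I v t

/-- `gnd_M(E)`: ground instances of equations of `E` with all ground terms in `M`. -/
def gndM (M : Set (Tm F)) (E : Set (Tm F × Tm F)) : Set (Tm F × Tm F) :=
  { e | ∃ p ∈ E, ∃ σ : Subst F,
      e = (Tm.subst σ p.1, Tm.subst σ p.2) ∧ Tm.subst σ p.1 ∈ M ∧ Tm.subst σ p.2 ∈ M }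

def IsUnifier (μ : Subst F) (s t : Tm F) : Prop := s.subst μ = t.subst μ

def IsMGU (μ : Subst F) (s t : Tm F) : Prop :=
  IsUnifier μ s t ∧ ∀ τ : Subst F, IsUnifier τ s t → ∃ δ : Subst F, τ = Subst.comp μ δ

/-- Simultaneous most general unifier of the equations `s₁ = t₁` and `s₂ = t₂`. -/
def IsSimMGU (μ : Subst F) (s₁ t₁ s₂ t₂ : Tm F) : Prop :=
  IsUnifier μ s₁ t₁ ∧ IsUnifier μ s₂ t₂ ∧
  ∀ τ : Subst F, IsUnifier τ s₁ t₁ → IsUnifier τ s₂ t₂ → ∃ δ : Subst F, τ = Subst.comp μ δ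

/-- Conjoin a constraint to every constrained term of a class. -/
def addConstr (A : CClass F) (Γ : Set (Tm F)) : CClass F :=
  { ct' | ∃ ct ∈ A, ct' = ⟨CTerm.constr ct ∪ Γ, CTerm.term ct⟩ }

/-- The rules of the calculus CC(X). -/
inductive Step {F : Type} (M : Set (Tm F)) : Set (CClass F) → Set (CClass F) → Prop
  | merge (P : Set (CClass F)) (A B C' : CClass F) (ρA ρB μ : Subst F) (ct₁ ct₂ : CTerm F)
      (hA : A ∈ P) (hB : B ∈ P)
      (hρA : IsNormRenaming A ρA) (hρB : IsNormRenaming B ρB)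
      (h1 : ct₁ ∈ A) (h2 : ct₂ ∈ B)
      (hmgu : IsMGU μ ct₁.term ct₂.term)
      (hC' : C' = substClass (addConstr (normC A ρA) (ct₁.constr ∪ ct₂.constr) ∪
                               addConstr (normC B ρB) (ct₁.constr ∪ ct₂.constr)) μ)
      (hnsub : ∀ C ∈ P, ¬ Subsumes M C C') :
      Step M P (insert C' P)
  | deduction (P : Set (CClass F)) (A B C' : CClass F) (f : F)
      (ss ts ss' ts' : List (Tm F)) (Γ Δ : Set (Tm F)) (Γs Δs : List (Set (Tm F))) (μ : Subst F)
      (hA : A ∈ P) (hB : B ∈ P)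
      (h1 : (⟨Γ, Tm.app f ss⟩ : CTerm F) ∈ A)
      (h2 : (⟨Δ, Tm.app f ts⟩ : CTerm F) ∈ B)
      (hl1 : ss'.length = ss.length) (hl2 : ts'.length = ss.length)
      (hl3 : ts.length = ss.length) (hl4 : Γs.length = ss.length) (hl5 : Δs.length = ss.length)
      (hside : ∀ i < ss.length, ∃ D ∈ P, ∃ ρ : Subst F, IsNormRenaming D ρ ∧
          (⟨Γs[i]!, ss'[i]!⟩ : CTerm F) ∈ normC D ρ ∧ (⟨Δs[i]!, ts'[i]!⟩ : CTerm F) ∈ normC D ρ)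
      (hmgu : IsSimMGU μ (Tm.app f ss') (Tm.app f ss) (Tm.app f ts') (Tm.app f ts))
      (hC' : C' = substClass
          ({⟨Γ ∪ Δ ∪ ⋃₀ {G | G ∈ Γs} ∪ ⋃₀ {G | G ∈ Δs}, Tm.app f ss'⟩,
            ⟨Γ ∪ Δ ∪ ⋃₀ {G | G ∈ Γs} ∪ ⋃₀ {G | G ∈ Δs}, Tm.app f ts'⟩} : CClass F) μ)
      (hnsub : ∀ C ∈ P, ¬ Subsumes M C C') :
      Step M P (insert C' P)
  | subsump (P : Set (CClass F)) (A B : CClass F)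
      (hA : A ∈ P) (hB : B ∈ P) (hne : A ≠ B) (hsub : Subsumes M B A) :
      Step M P (P \ {A})

/-- The single-term class `{f(x₁,…,x_k) ∈ M ∥ f(x₁,…,x_k)}`. -/
def singleTermClass (ar : F → ℕ) (f : F) : CClass F :=
  {⟨{Tm.app f ((List.range (ar f)).map Tm.var)}, Tm.app f ((List.range (ar f)).map Tm.var)⟩}

/-- The initial state `Π₀` of CC(X) for the equations `E`. -/
def initState (ar : F → ℕ) (E : Set (Tm F × Tm F)) : Set (CClass F) :=
  { A | ∃ p ∈ E, A = ({⟨{p.1, p.2}, p.1⟩, ⟨{p.1, p.2}, p.2⟩} : CClass F) } ∪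
  { A | ∃ f : F, A = singleTermClass ar f }

/-- `B` subsumes `A` by matching. -/
def SubsumesByMatching (M : Set (Tm F)) (B A : CClass F) : Prop :=
  ∃ σ : Subst F, Subst.dom σ ⊆ sepVars B ∧ (∀ x ∈ sepVars B, (σ x).varsIn ⊆ varsAll A) ∧
    ∀ ct ∈ A, ∃ τ : Subst F, Subst.dom τ ⊆ freeVars B ∧
      (∀ y ∈ freeVars B, (τ y).varsIn ⊆ varsAll A) ∧
      ∃ ct' ∈ B, CTerm.term ct = ((CTerm.term ct').subst σ).subst τ ∧
        ∀ δ : Subst F, ConstrHolds M (CTerm.constr ct) δ →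
          ∃ δ' : Subst F,
            ConstrHolds M (substConstr (substConstr (substConstr (CTerm.constr ct') σ) τ) δ) δ'

/-- `M` determined by the symbol-count ordering and a bound `β`. -/
def Mle (β : Tm F) : Set (Tm F) := { t | t.Ground ∧ t.size ≤ β.size }

def varsFinset (t : Tm F) : Finset ℕ := t.varsList.toFinset

/-- Truth of the LIA abstraction `lic(t ⪯ β)` under an integer assignment `v`. -/
def licHolds (t β : Tm F) (v : ℕ → ℕ) : Prop :=
  (∀ x ∈ varsFinset t, 1 ≤ v x) ∧
  (∑ x ∈ varsFinset t, (t.count x : ℤ) * (v x : ℤ)) ≤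
    (β.size : ℤ) - ((t.size : ℤ) - ∑ x ∈ varsFinset t, (t.count x : ℤ))


section Helpers
variable {F : Type}

theorem tm_induction {motive : Tm F → Prop} (hv : ∀ x, motive (Tm.var x))
    (ha : ∀ f ts, (∀ t ∈ ts, motive t) → motive (Tm.app f ts)) : ∀ t, motive t := by
  have key : ∀ n, ∀ t : Tm F, sizeOf t ≤ n → motive t := by
    intro n
    induction n with
    | zero => intro t ht; cases t <;> simp at ht
    | succ n ih =>
      intro t ht
      cases t with
      | var x => exact hv x
      | app f ts =>
        refine ha f ts fun s hs => ih s ?_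
        have h1 := List.sizeOf_lt_of_mem hs
        simp only [Tm.app.sizeOf_spec] at ht
        omega
  exact fun t => key (sizeOf t) t le_rfl

theorem Tm.subst_var (σ : Subst F) (x : ℕ) : (Tm.var x).subst σ = σ x := by
  simp [Tm.subst]

theorem Tm.subst_app (σ : Subst F) (f : F) (ts : List (Tm F)) :
    (Tm.app f ts).subst σ = Tm.app f (ts.map (Tm.subst σ)) := by
  rw [Tm.subst]
  congr 1
  simp [List.attach_map_val]

theorem Tm.varsList_var (x : ℕ) : (Tm.var x : Tm F).varsList = [x] := by
  simp [Tm.varsList]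

theorem Tm.varsList_app (f : F) (ts : List (Tm F)) :
    (Tm.app f ts).varsList = (ts.map Tm.varsList).flatten := by
  rw [Tm.varsList]
  congr 1
  simp [List.attach_map_val]


theorem flatten_map_flatMap {α β : Type*} (g : α → List β) (l : List (List α)) :
    (l.map (fun xs => xs.flatMap g)).flatten = l.flatten.flatMap g := by
  induction l with
  | nil => simp
  | cons x xs ih => simp [ih]

theorem Tm.varsList_subst (σ : Subst F) (t : Tm F) :
    (t.subst σ).varsList = t.varsList.flatMap (fun x => (σ x).varsList) := by
  induction t using tm_induction with
  | hv x => simp [Tm.subst_var, Tm.varsList_var]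
  | ha f ts ih =>
    rw [Tm.subst_app, Tm.varsList_app, Tm.varsList_app]
    rw [List.map_map]
    have : (ts.map (Tm.varsList ∘ Tm.subst σ)) =
        ts.map (fun s => s.varsList.flatMap (fun x => (σ x).varsList)) :=
      List.map_congr_left (fun s hs => ih s hs)
    rw [this, show (ts.map (fun s => s.varsList.flatMap (fun x => (σ x).varsList))) =
        ((ts.map Tm.varsList).map (fun xs => xs.flatMap (fun x => (σ x).varsList))) by
      rw [List.map_map]; rfl]
    exact flatten_map_flatMap _ _

theorem Tm.ground_subst {σ : Subst F} {t : Tm F} :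
    (t.subst σ).Ground ↔ ∀ x ∈ t.varsIn, (σ x).Ground := by
  simp [Tm.Ground, Tm.varsList_subst, List.flatMap_eq_nil_iff, Tm.varsIn]

theorem Tm.subst_congr {σ δ : Subst F} {t : Tm F} (h : ∀ x ∈ t.varsIn, σ x = δ x) :
    t.subst σ = t.subst δ := by
  induction t using tm_induction with
  | hv x => simpa [Tm.subst_var, Tm.varsIn, Tm.varsList_var] using h
  | ha f ts ih =>
    rw [Tm.subst_app, Tm.subst_app]
    congr 1
    refine List.map_congr_left fun s hs => ih s hs fun x hx => h x ?_
    simp only [Tm.varsIn, Set.mem_setOf_eq, Tm.varsList_app, List.mem_flatten] at *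
    exact ⟨s.varsList, List.mem_map_of_mem hs, hx⟩

theorem Tm.subst_id (t : Tm F) : t.subst Tm.var = t := by
  induction t using tm_induction with
  | hv x => simp [Tm.subst_var]
  | ha f ts ih =>
    rw [Tm.subst_app]
    congr 1
    simpa using List.map_congr_left ih

theorem Tm.subst_subst (σ δ : Subst F) (t : Tm F) :
    (t.subst σ).subst δ = t.subst (Subst.comp σ δ) := by
  induction t using tm_induction with
  | hv x => simp [Tm.subst_var, Subst.comp]
  | ha f ts ih =>
    rw [Tm.subst_app, Tm.subst_app, Tm.subst_app, List.map_map]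
    congr 1
    exact List.map_congr_left fun s hs => ih s hs


theorem entails_refl (E0 : Set (Tm F × Tm F)) (s : Tm F) : Entails E0 s s :=
  fun _ _ _ _ _ => rfl

theorem entails_symm {E0 : Set (Tm F × Tm F)} {s t : Tm F} (h : Entails E0 s t) :
    Entails E0 t s := fun β hβ I v hE => (h β hβ I v hE).symm

theorem entails_trans {E0 : Set (Tm F × Tm F)} {s t u : Tm F} (h1 : Entails E0 s t)
    (h2 : Entails E0 t u) : Entails E0 s u :=
  fun β hβ I v hE => (h1 β hβ I v hE).trans (h2 β hβ I v hE)

/-- Override a substitution by `α` on a finite set of variables. -/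
def ovSub (τ : Subst F) (α : Tm F) (S : Finset ℕ) : Subst F :=
  fun y => if y ∈ S then α else τ y

theorem flip_step {M : Set (Tm F)} {E : Set (Tm F × Tm F)} {P : Set (CClass F)}
    {α : Tm F} {A : CClass F} {Γ₀ : Set (Tm F)}
    (hαM : α ∈ M) (hMg : ∀ t ∈ M, t.Ground) (hcl : PiClosed M P α) (hAP : A ∈ P)
    (hconstr : ∀ ct ∈ A, CTerm.constr ct = Γ₀)
    (hmod : ∀ σ : Subst F, GroundingForClass σ A →
        ∀ s ∈ applyClass M A σ, ∀ t ∈ applyClass M A σ, Entails (gndM M E) s t)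
    {τ : Subst F} (hτg : GroundingForClass τ A) (hτc : ConstrHolds M Γ₀ τ)
    {x : ℕ} (hx : x ∈ freeVars A) :
    GroundingForClass (Function.update τ x α) A ∧
    ConstrHolds M Γ₀ (Function.update τ x α) ∧
    ∀ ct ∈ A, Entails (gndM M E) ((CTerm.term ct).subst τ)
      ((CTerm.term ct).subst (Function.update τ x α)) := by
  classical
  obtain ⟨hxT, hxS⟩ := hx
  have hex : ∃ ct' ∈ A, x ∉ (CTerm.term ct').varsIn := by
    by_contra hc
    push_neg at hc
    exact hxS (Set.mem_iInter₂.mpr hc)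
  obtain ⟨ct', hct', hx'⟩ := hex
  set τ' := Function.update τ x α with hτ'
  have hdiff : ∀ y, τ y ≠ τ' y → τ' y = α := by
    intro y hy
    by_cases h : y = x
    · subst h; simp [hτ']
    · exact absurd (Function.update_of_ne h α τ).symm hy
  have hc' : ConstrHolds M Γ₀ τ' := by
    rintro u ⟨v, hv, rfl⟩
    have hocc : OccursIn v P :=
      ⟨A, hAP, ct', hct', Or.inr ⟨v, by rw [hconstr ct' hct']; exact hv, Subterm.refl v⟩⟩
    exact hcl v hocc τ (hτc ⟨v, hv, rfl⟩) τ' hdiff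
  have hg' : GroundingForClass τ' A := by
    intro ct hct
    constructor
    · rw [Tm.ground_subst]
      intro y hy
      by_cases h : y = x
      · subst h; simp only [hτ', Function.update_self]; exact hMg α hαM
      · rw [hτ', Function.update_of_ne h]
        exact Tm.ground_subst.mp (hτg ct hct).1 y hy
    · intro u hu
      have hu0 : u ∈ Γ₀ := by rw [← hconstr ct hct]; exact hu
      exact hMg _ (hc' ⟨u, hu0, rfl⟩)
  refine ⟨hg', hc', fun ct hct => ?_⟩
  have mem1 : (CTerm.term ct).subst τ ∈ applyClass M A τ :=
    ⟨ct, hct, by rw [hconstr ct hct]; exact hτc, rfl⟩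
  have mem2 : (CTerm.term ct').subst τ ∈ applyClass M A τ :=
    ⟨ct', hct', by rw [hconstr ct' hct']; exact hτc, rfl⟩
  have mem3 : (CTerm.term ct').subst τ' ∈ applyClass M A τ' :=
    ⟨ct', hct', by rw [hconstr ct' hct']; exact hc', rfl⟩
  have mem4 : (CTerm.term ct).subst τ' ∈ applyClass M A τ' :=
    ⟨ct, hct, by rw [hconstr ct hct]; exact hc', rfl⟩
  have e1 := hmod τ hτg _ mem1 _ mem2
  have e2 := hmod τ' hg' _ mem3 _ mem4
  have heq : (CTerm.term ct').subst τ = (CTerm.term ct').subst τ' := by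
    refine Tm.subst_congr fun y hy => ?_
    have : y ≠ x := fun h => hx' (h ▸ hy)
    exact (Function.update_of_ne this α τ).symm
  rw [heq] at e1
  exact entails_trans e1 e2

theorem flip_chain {M : Set (Tm F)} {E : Set (Tm F × Tm F)} {P : Set (CClass F)}
    {α : Tm F} {A : CClass F} {Γ₀ : Set (Tm F)}
    (hαM : α ∈ M) (hMg : ∀ t ∈ M, t.Ground) (hcl : PiClosed M P α) (hAP : A ∈ P)
    (hconstr : ∀ ct ∈ A, CTerm.constr ct = Γ₀)
    (hmod : ∀ σ : Subst F, GroundingForClass σ A →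
        ∀ s ∈ applyClass M A σ, ∀ t ∈ applyClass M A σ, Entails (gndM M E) s t)
    {τ : Subst F} (hτg : GroundingForClass τ A) (hτc : ConstrHolds M Γ₀ τ)
    (S : Finset ℕ) (hS : ∀ y ∈ S, y ∈ freeVars A) :
    GroundingForClass (ovSub τ α S) A ∧ ConstrHolds M Γ₀ (ovSub τ α S) ∧
    ∀ ct ∈ A, Entails (gndM M E) ((CTerm.term ct).subst τ)
      ((CTerm.term ct).subst (ovSub τ α S)) := by
  classical
  induction S using Finset.induction_on with
  | empty =>
    have h0 : ovSub τ α ∅ = τ := funext fun y => by simp [ovSub]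
    rw [h0]
    exact ⟨hτg, hτc, fun ct _ => entails_refl _ _⟩
  | @insert a S ha ih =>
    have hins : ovSub τ α (insert a S) = Function.update (ovSub τ α S) a α := by
      funext y
      rw [Function.update_apply]
      by_cases h : y = a
      · simp [ovSub, h]
      · simp [ovSub, h]
    obtain ⟨g, c, e⟩ := ih fun y hy => hS y (Finset.mem_insert_of_mem hy)
    obtain ⟨g', c', e'⟩ :=
      flip_step hαM hMg hcl hAP hconstr hmod g c (hS a (Finset.mem_insert_self a S))
    rw [hins]
    exact ⟨g', c', fun ct hct => entails_trans (e ct hct) (e' ct hct)⟩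

end Helpers

/-- Corollary. If all ground instances of pairs from `A` are
entailed equal, the same holds for `norm(A)`. -/
theorem entails_norm_of_entails {F : Type} [Finite F] [Nonempty F]
    (M : Set (Tm F)) (hMfin : M.Finite) (hMg : ∀ t ∈ M, t.Ground)
    (E : Set (Tm F × Tm F)) (hEfin : E.Finite)
    (P : Set (CClass F)) (α : Tm F) (hαM : α ∈ M) (hcl : PiClosed M P α)
    (A : CClass F) (hAP : A ∈ P) (hAfin : A.Finite)
    (Γ₀ : Set (Tm F)) (hconstr : ∀ ct ∈ A, CTerm.constr ct = Γ₀)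
    (ρ : Subst F) (hρ : IsNormRenaming A ρ)
    (hmod : ∀ σ : Subst F, GroundingForClass σ A →
        ∀ s ∈ applyClass M A σ, ∀ t ∈ applyClass M A σ, Entails (gndM M E) s t) :
    ∀ σ : Subst F, GroundingForClass σ (normC A ρ) →
      ∀ s ∈ applyClass M (normC A ρ) σ, ∀ t ∈ applyClass M (normC A ρ) σ,
        Entails (gndM M E) s t := by
  classical
  intro σ hg s hs t ht
  set η := Subst.comp ρ σ with hηdef
  have hρid : ∀ y, y ∉ freeVars A → ρ y = Tm.var y := hρ.2.1
  -- σ is grounding for A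
  have hgσ : GroundingForClass σ A := by
    intro ct hct
    have hmem : (⟨CTerm.constr ct ∪ substConstr (CTerm.constr ct) ρ, CTerm.term ct⟩ : CTerm F)
        ∈ normC A ρ := Set.mem_union_left _ ⟨ct, hct, rfl⟩
    obtain ⟨h1, h2⟩ := hg _ hmem
    exact ⟨h1, fun u hu => h2 u (Set.mem_union_left _ hu)⟩
  -- η is grounding for A
  have hgη : GroundingForClass η A := by
    intro ct hct
    have hterm : ((CTerm.term ct).subst η).Ground := by
      rw [hηdef, ← Tm.subst_subst]
      by_cases hfv : ((CTerm.term ct).varsIn ∩ freeVars A).Nonempty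
      · have hmem : (⟨CTerm.constr ct ∪ substConstr (CTerm.constr ct) ρ,
            (CTerm.term ct).subst ρ⟩ : CTerm F) ∈ normC A ρ :=
          Set.mem_union_right _ ⟨ct, hct, hfv, rfl⟩
        exact (hg _ hmem).1
      · have hid : (CTerm.term ct).subst ρ = CTerm.term ct := by
          have h1 : (CTerm.term ct).subst ρ = (CTerm.term ct).subst Tm.var :=
            Tm.subst_congr fun y hy => hρid y fun hyf => hfv ⟨y, hy, hyf⟩
          rw [h1, Tm.subst_id]
        rw [hid]
        exact (hgσ ct hct).1
    refine ⟨hterm, fun u hu => ?_⟩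
    have hmem : (⟨CTerm.constr ct ∪ substConstr (CTerm.constr ct) ρ, CTerm.term ct⟩ : CTerm F)
        ∈ normC A ρ := Set.mem_union_left _ ⟨ct, hct, rfl⟩
    have hgr : ((u.subst ρ).subst σ).Ground :=
      (hg _ hmem).2 (u.subst ρ) (Set.mem_union_right _ ⟨u, hu, rfl⟩)
    rwa [Tm.subst_subst] at hgr
  -- decomposition of elements of normC
  have hsplit : ∀ ct0 ∈ normC A ρ, ∃ ct1 ∈ A,
      CTerm.constr ct0 = Γ₀ ∪ substConstr Γ₀ ρ ∧
      (CTerm.term ct0 = CTerm.term ct1 ∨ CTerm.term ct0 = (CTerm.term ct1).subst ρ) := by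
    rintro ct0 (⟨ct1, h1, rfl⟩ | ⟨ct1, h1, hne, rfl⟩)
    · exact ⟨ct1, h1, by rw [hconstr ct1 h1], Or.inl rfl⟩
    · exact ⟨ct1, h1, by rw [hconstr ct1 h1], Or.inr rfl⟩
  obtain ⟨cts, hcts, hholds, rfl⟩ := hs
  obtain ⟨ctt, hctt, hholdt, rfl⟩ := ht
  obtain ⟨ct1, hct1, hceq1, hterm1⟩ := hsplit cts hcts
  obtain ⟨ct2, hct2, hceq2, hterm2⟩ := hsplit ctt hctt
  rw [hceq1] at hholds
  -- constraint facts
  have hc1 : ConstrHolds M Γ₀ σ := by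
    rintro u ⟨v, hv, rfl⟩
    exact hholds ⟨v, Set.mem_union_left _ hv, rfl⟩
  have hc2 : ConstrHolds M Γ₀ η := by
    rintro u ⟨v, hv, rfl⟩
    have hm : (v.subst ρ).subst σ ∈ M :=
      hholds ⟨v.subst ρ, Set.mem_union_right _ ⟨v, hv, rfl⟩, rfl⟩
    show v.subst (Subst.comp ρ σ) ∈ M
    rw [← Tm.subst_subst]
    exact hm
  -- the finite set of free variables
  have hfvfin : (freeVars A).Finite := by
    have htv : (termVars A).Finite :=
      Set.Finite.biUnion hAfin fun ct _ => (CTerm.term ct).varsList.finite_toSet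
    exact htv.subset Set.diff_subset
  set S := hfvfin.toFinset with hSdef
  have hSfree : ∀ y ∈ S, y ∈ freeVars A := fun y hy => hfvfin.mem_toFinset.mp hy
  obtain ⟨hgθ, hcθ, heθ⟩ :=
    flip_chain hαM hMg hcl hAP hconstr hmod hgσ hc1 S hSfree
  obtain ⟨hgθ', hcθ', heθ'⟩ :=
    flip_chain hαM hMg hcl hAP hconstr hmod hgη hc2 S hSfree
  -- the two overridden substitutions agree on all terms of A
  have hagree : ∀ ct ∈ A, (CTerm.term ct).subst (ovSub η α S) =
      (CTerm.term ct).subst (ovSub σ α S) := by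
    intro ct hct
    refine Tm.subst_congr fun y _ => ?_
    by_cases h : y ∈ S
    · simp [ovSub, h]
    · have hyf : y ∉ freeVars A := fun hf => h (hfvfin.mem_toFinset.mpr hf)
      simp only [ovSub, if_neg h, hηdef, Subst.comp, hρid y hyf, Tm.subst_var]
  -- connect each side to the common middle substitution
  have hub : ∀ ct ∈ A, ∀ b : Bool, Entails (gndM M E)
      ((CTerm.term ct).subst (cond b σ η)) ((CTerm.term ct).subst (ovSub σ α S)) := by
    intro ct hct b
    cases b
    · have h0 := heθ' ct hct
      rw [hagree ct hct] at h0
      exact h0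
    · exact heθ ct hct
  have main : ∀ ct1 ∈ A, ∀ ct2 ∈ A, ∀ b1 b2 : Bool, Entails (gndM M E)
      ((CTerm.term ct1).subst (cond b1 σ η)) ((CTerm.term ct2).subst (cond b2 σ η)) := by
    intro ct1 h1 ct2 h2 b1 b2
    have hmid : Entails (gndM M E) ((CTerm.term ct1).subst (ovSub σ α S))
        ((CTerm.term ct2).subst (ovSub σ α S)) :=
      hmod _ hgθ _ ⟨ct1, h1, by rw [hconstr ct1 h1]; exact hcθ, rfl⟩
        _ ⟨ct2, h2, by rw [hconstr ct2 h2]; exact hcθ, rfl⟩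
    exact entails_trans (entails_trans (hub ct1 h1 b1) hmid) (entails_symm (hub ct2 h2 b2))
  -- rewrite the two terms into the canonical form
  have hs' : ∃ b1 : Bool, (CTerm.term cts).subst σ = (CTerm.term ct1).subst (cond b1 σ η) := by
    rcases hterm1 with h | h
    · exact ⟨true, by rw [h]; rfl⟩
    · exact ⟨false, by rw [h, Tm.subst_subst]; rfl⟩
  have ht' : ∃ b2 : Bool, (CTerm.term ctt).subst σ = (CTerm.term ct2).subst (cond b2 σ η) := by
    rcases hterm2 with h | h
    · exact ⟨true, by rw [h]; rfl⟩
    · exact ⟨false, by rw [h, Tm.subst_subst]; rfl⟩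
  obtain ⟨b1, hb1⟩ := hs'
  obtain ⟨b2, hb2⟩ := ht'
  rw [hb1, hb2]
  exact main ct1 hct1 ct2 hct2 b1 b2

end NGCC
end

section
/- Soundness of CC(𝒳): assume M is Π-closed for some ground term in M for every state Π in the run. For any run of ⇒_CC(𝒳) starting from the initial state Π₀ for E and M, any state Π' in this run, any class A ∈ Π', any constrained terms Γ ∥ s and Δ ∥ t in norm(A), and any grounding substitution σ such that Γσ and Δσ are satisfiable, it holds that gnd_M(E) ⊨ sσ ≈ tσ. -/
namespace NGCC

variable {F : Type}

namespace Tm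

theorem ind {P : Tm F → Prop} (hv : ∀ x, P (var x))
    (ha : ∀ (f : F) (ts : List (Tm F)), (∀ t ∈ ts, P t) → P (app f ts)) : ∀ t, P t
  | var x => hv x
  | app f ts => ha f ts (fun t ht => ind hv ha t)
  decreasing_by simp only [app.sizeOf_spec]; have h := List.sizeOf_lt_of_mem ht; omega

theorem subst_var_s6 (σ : Subst F) (x : ℕ) : (var x).subst σ = σ x := by
  simp [Tm.subst]

theorem subst_app_s6 (σ : Subst F) (f : F) (ts : List (Tm F)) :
    (app f ts).subst σ = app f (ts.map (·.subst σ)) := by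
  rw [Tm.subst]
  simp [List.map_attach_eq_pmap]

theorem varsList_var_s6 (x : ℕ) : (var x : Tm F).varsList = [x] := by simp [Tm.varsList]

theorem varsList_app_s6 (f : F) (ts : List (Tm F)) :
    (app f ts).varsList = (ts.map varsList).flatten := by
  rw [Tm.varsList]; simp [List.map_attach_eq_pmap]

theorem eval_app {α : Type} (I : F → List α → α) (v : ℕ → α) (f : F) (ts : List (Tm F)) :
    (app f ts).eval I v = I f (ts.map (·.eval I v)) := by
  rw [Tm.eval]; simp [List.map_attach_eq_pmap]

theorem subst_id_s6 (t : Tm F) : t.subst var = t := by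
  induction t using ind with
  | hv x => rw [subst_var_s6]
  | ha f ts ih =>
      rw [subst_app_s6]; congr 1
      conv_rhs => rw [← List.map_id ts]
      exact List.map_congr_left (fun t ht => ih t ht)

theorem subst_subst_s6 (t : Tm F) (σ δ : Subst F) :
    (t.subst σ).subst δ = t.subst (Subst.comp σ δ) := by
  induction t using ind with
  | hv x => rw [subst_var_s6, subst_var_s6]; rfl
  | ha f ts ih =>
      rw [subst_app_s6, subst_app_s6, subst_app_s6, List.map_map]
      exact congrArg _ (List.map_congr_left (fun t ht => ih t ht))

theorem subst_congr_s6 {σ δ : Subst F} (t : Tm F) (h : ∀ x ∈ t.varsList, σ x = δ x) :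
    t.subst σ = t.subst δ := by
  induction t using ind with
  | hv x => rw [subst_var_s6, subst_var_s6]; exact h x (by rw [varsList_var_s6]; simp)
  | ha f ts ih =>
      rw [subst_app_s6, subst_app_s6]
      refine congrArg _ (List.map_congr_left (fun t ht => ih t ht fun x hx => h x ?_))
      rw [varsList_app_s6]
      simp only [List.mem_flatten, List.mem_map]
      exact ⟨t.varsList, ⟨t, ht, rfl⟩, hx⟩

theorem ground_subst_s6 {t : Tm F} (h : t.Ground) (σ : Subst F) : t.subst σ = t := by
  rw [subst_congr_s6 t (σ := σ) (δ := var) (by rw [Ground] at h; rw [h]; simp), subst_id_s6]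

theorem mem_varsList_subst {x : ℕ} {t : Tm F} {σ : Subst F} :
    x ∈ (t.subst σ).varsList ↔ ∃ y ∈ t.varsList, x ∈ (σ y).varsList := by
  induction t using ind with
  | hv y => rw [subst_var_s6, varsList_var_s6]; simp
  | ha f ts ih =>
      rw [subst_app_s6, varsList_app_s6, varsList_app_s6]
      simp only [List.mem_flatten, List.mem_map, List.map_map]
      constructor
      · rintro ⟨l, ⟨t, ht, rfl⟩, hx⟩
        obtain ⟨y, hy, hxy⟩ := (ih t ht).1 hx
        exact ⟨y, ⟨t.varsList, ⟨t, ht, rfl⟩, hy⟩, hxy⟩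
      · rintro ⟨y, ⟨l, ⟨t, ht, rfl⟩, hy⟩, hxy⟩
        exact ⟨(t.subst σ).varsList, ⟨t, ht, rfl⟩, (ih t ht).2 ⟨y, hy, hxy⟩⟩

end Tm

section Layer2
variable {F : Type} {M : Set (Tm F)} {E : Set (Tm F × Tm F)}

theorem Entails.refl (Eqs : Set (Tm F × Tm F)) (t : Tm F) : Entails Eqs t t :=
  fun _ _ _ _ _ => rfl

theorem Entails.symm {Eqs : Set (Tm F × Tm F)} {s t : Tm F} (h : Entails Eqs s t) :
    Entails Eqs t s := fun α hα I v hI => (h α hα I v hI).symm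

theorem Entails.trans {Eqs : Set (Tm F × Tm F)} {s t u : Tm F}
    (h1 : Entails Eqs s t) (h2 : Entails Eqs t u) : Entails Eqs s u :=
  fun α hα I v hI => (h1 α hα I v hI).trans (h2 α hα I v hI)

theorem Entails.of_mem {Eqs : Set (Tm F × Tm F)} {s t : Tm F} (h : (s, t) ∈ Eqs) :
    Entails Eqs s t := fun _ _ I v hI => hI (s, t) h v

theorem Entails.app {Eqs : Set (Tm F × Tm F)} {as bs : List (Tm F)} (f : F)
    (hlen : as.length = bs.length)
    (h : ∀ i (hi : i < as.length), Entails Eqs as[i] bs[i]!) :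
    Entails Eqs (Tm.app f as) (Tm.app f bs) := by
  intro α hα I v hI
  rw [Tm.eval_app, Tm.eval_app]
  congr 1
  refine List.ext_getElem (by simp [hlen]) (fun i h1 h2 => ?_)
  simp only [List.getElem_map]
  have := h i (by simpa using h1) α hα I v hI
  rwa [getElem!_pos bs i (by rw [← hlen]; simpa using h1)] at this

theorem sep_not_free {A : CClass F} {y : ℕ} (h : y ∈ sepVars A) : y ∉ freeVars A :=
  fun hy => hy.2 h

theorem normRenaming_sep {A : CClass F} {ρ : Subst F} (hρ : IsNormRenaming A ρ)
    {y : ℕ} (h : y ∈ sepVars A) : ρ y = Tm.var y := hρ.2.1 y (sep_not_free h)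

theorem normC_elim {A : CClass F} {ρ : Subst F} {ct : CTerm F} (h : ct ∈ normC A ρ) :
    ∃ ct₀ ∈ A, ct.constr = ct₀.constr ∪ substConstr ct₀.constr ρ ∧
      (ct.term = ct₀.term ∨ ct.term = ct₀.term.subst ρ) := by
  rcases h with ⟨ct₀, h₀, rfl⟩ | ⟨ct₀, h₀, _, rfl⟩
  · exact ⟨ct₀, h₀, rfl, Or.inl rfl⟩
  · exact ⟨ct₀, h₀, rfl, Or.inr rfl⟩

/-- The key invariant for soundness. -/
def Inv2 (M : Set (Tm F)) (E : Set (Tm F × Tm F)) (A : CClass F) : Prop :=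
  ∀ ct₁ ∈ A, ∀ ct₂ ∈ A, ∀ σ₁ σ₂ : Subst F,
    (∀ y ∈ sepVars A, σ₁ y = σ₂ y) →
    (∀ u ∈ CTerm.constr ct₁, u.subst σ₁ ∈ M) →
    (∀ u ∈ CTerm.constr ct₂, u.subst σ₂ ∈ M) →
    Entails (gndM M E) ((CTerm.term ct₁).subst σ₁) ((CTerm.term ct₂).subst σ₂)

theorem inv2_norm {A : CClass F} (hInv : Inv2 M E A) {ρ : Subst F}
    (hρ : IsNormRenaming A ρ) {ct₁ ct₂ : CTerm F}
    (h₁ : ct₁ ∈ normC A ρ) (h₂ : ct₂ ∈ normC A ρ) (σ : Subst F)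
    (hc₁ : ∀ u ∈ CTerm.constr ct₁, u.subst σ ∈ M)
    (hc₂ : ∀ u ∈ CTerm.constr ct₂, u.subst σ ∈ M) :
    Entails (gndM M E) ((CTerm.term ct₁).subst σ) ((CTerm.term ct₂).subst σ) := by
  obtain ⟨c₁, hc₁A, hcon₁, hterm₁⟩ := normC_elim h₁
  obtain ⟨c₂, hc₂A, hcon₂, hterm₂⟩ := normC_elim h₂
  -- handle the four cases uniformly
  have main : ∀ (c : CTerm F), c ∈ A → ∀ (ct : CTerm F),
      CTerm.constr ct = CTerm.constr c ∪ substConstr (CTerm.constr c) ρ →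
      (CTerm.term ct = CTerm.term c ∨ CTerm.term ct = (CTerm.term c).subst ρ) →
      (∀ u ∈ CTerm.constr ct, u.subst σ ∈ M) →
      ∃ σ' : Subst F, (CTerm.term ct).subst σ = (CTerm.term c).subst σ' ∧
        (∀ y ∈ sepVars A, σ' y = σ y) ∧ (∀ u ∈ CTerm.constr c, u.subst σ' ∈ M) := by
    intro c hcA ct hcon hterm hsat
    rcases hterm with h | h
    · exact ⟨σ, by rw [h], fun y _ => rfl,
        fun u hu => hsat u (by rw [hcon]; exact Or.inl hu)⟩
    · refine ⟨Subst.comp ρ σ, by rw [h, Tm.subst_subst_s6], fun y hy => ?_, fun u hu => ?_⟩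
      · show (ρ y).subst σ = σ y
        rw [normRenaming_sep hρ hy, Tm.subst_var_s6]
      · rw [show u.subst (Subst.comp ρ σ) = (u.subst ρ).subst σ from (Tm.subst_subst_s6 u ρ σ).symm]
        exact hsat _ (by rw [hcon]; exact Or.inr ⟨u, hu, rfl⟩)
  obtain ⟨σ₁, he₁, ha₁, hs₁⟩ := main c₁ hc₁A ct₁ hcon₁ hterm₁ hc₁
  obtain ⟨σ₂, he₂, ha₂, hs₂⟩ := main c₂ hc₂A ct₂ hcon₂ hterm₂ hc₂
  rw [he₁, he₂]
  exact hInv c₁ hc₁A c₂ hc₂A σ₁ σ₂ (fun y hy => (ha₁ y hy).trans (ha₂ y hy).symm) hs₁ hs₂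

end Layer2

section Layer3
variable {F : Type} {M : Set (Tm F)} {E : Set (Tm F × Tm F)}

/-- Update a substitution, sending the variables in `xs` to `α`. -/
def updL (τ : Subst F) (α : Tm F) (xs : List ℕ) : Subst F :=
  fun y => if y ∈ xs then α else τ y

theorem updL_cons (τ : Subst F) (α : Tm F) (x : ℕ) (xs : List ℕ) :
    updL τ α (x :: xs) = updL (updL τ α xs) α [x] := by
  funext y
  simp only [updL, List.mem_cons, List.mem_singleton]
  by_cases h1 : y = x <;> by_cases h2 : y ∈ xs <;> simp [h1, h2]

theorem occursIn_constr {P : Set (CClass F)} {A : CClass F} {ct : CTerm F} {u : Tm F}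
    (hA : A ∈ P) (hct : ct ∈ A) (hu : u ∈ CTerm.constr ct) : OccursIn u P :=
  ⟨A, hA, ct, hct, Or.inr ⟨u, hu, Subterm.refl u⟩⟩

theorem piClosed_updL {P : Set (CClass F)} {α : Tm F} (hPC : PiClosed M P α)
    {u : Tm F} (hocc : OccursIn u P) {τ : Subst F} (h : u.subst τ ∈ M) (x : ℕ) :
    u.subst (updL τ α [x]) ∈ M := by
  refine hPC u hocc τ h _ (fun y hy => ?_)
  simp only [updL, List.mem_singleton] at hy ⊢
  by_cases h1 : y = x
  · simp [h1]
  · simp [h1] at hy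

theorem chain {Eqs : Set (Tm F × Tm F)} (t : Tm F) (S : Set ℕ) (Q : Subst F → Prop) (α : Tm F)
    (Hstep : ∀ τ, Q τ → ∀ x, x ∉ S →
      Q (updL τ α [x]) ∧ Entails Eqs (t.subst τ) (t.subst (updL τ α [x]))) :
    ∀ xs : List ℕ, (∀ x ∈ xs, x ∉ S) → ∀ τ, Q τ →
      Q (updL τ α xs) ∧ Entails Eqs (t.subst τ) (t.subst (updL τ α xs)) := by
  intro xs
  induction xs with
  | nil =>
      intro _ τ hQ
      have : updL τ α [] = τ := by funext y; simp [updL]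
      rw [this]; exact ⟨hQ, Entails.refl Eqs _⟩
  | cons x xs ih =>
      intro hxs τ hQ
      obtain ⟨hQ', hE'⟩ := ih (fun y hy => hxs y (List.mem_cons_of_mem x hy)) τ hQ
      obtain ⟨hQ'', hE''⟩ := Hstep _ hQ' x (hxs x (List.mem_cons_self (a := x) (l := xs)))
      rw [updL_cons]
      exact ⟨hQ'', hE'.trans hE''⟩

/-- The two-term chain argument, shared by the initial state and the Deduction rule. -/
theorem twoTerm {Eqs : Set (Tm F × Tm F)} (u₁ u₂ : Tm F) (S : Set ℕ)
    (Q : Subst F → Prop) (α : Tm F)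
    (hsep : ∀ x, x ∈ u₁.varsList → x ∈ u₂.varsList → x ∈ S)
    (hQupd : ∀ τ, Q τ → ∀ x : ℕ, Q (updL τ α [x]))
    (hpoint : ∀ τ, Q τ → Entails Eqs (u₁.subst τ) (u₂.subst τ))
    (σ₁ σ₂ : Subst F) (hagree : ∀ y ∈ S, σ₁ y = σ₂ y) (hQ₁ : Q σ₁) (hQ₂ : Q σ₂) :
    Entails Eqs (u₁.subst σ₁) (u₁.subst σ₂) ∧ Entails Eqs (u₁.subst σ₁) (u₂.subst σ₂) := by
  classical
  have Hstep : ∀ τ, Q τ → ∀ x, x ∉ S →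
      Q (updL τ α [x]) ∧ Entails Eqs (u₁.subst τ) (u₁.subst (updL τ α [x])) := by
    intro τ hQ x hx
    refine ⟨hQupd τ hQ x, ?_⟩
    by_cases h2 : x ∈ u₂.varsList
    · have h1 : x ∉ u₁.varsList := fun h1 => hx (hsep x h1 h2)
      have : u₁.subst τ = u₁.subst (updL τ α [x]) := by
        refine Tm.subst_congr_s6 u₁ (fun y hy => ?_)
        have : y ≠ x := fun h => h1 (h ▸ hy)
        simp [updL, this]
      rw [← this]; exact Entails.refl Eqs _
    · have : u₂.subst τ = u₂.subst (updL τ α [x]) := by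
        refine Tm.subst_congr_s6 u₂ (fun y hy => ?_)
        have : y ≠ x := fun h => h2 (h ▸ hy)
        simp [updL, this]
      exact (hpoint τ hQ).trans (this ▸ ((hpoint _ (hQupd τ hQ x)).symm))
  set xs : List ℕ := (u₁.varsList ++ u₂.varsList).filter (fun y => decide (y ∉ S)) with hxs
  have hmem : ∀ x ∈ xs, x ∉ S := by
    intro x hx
    have := List.of_mem_filter hx
    simpa using this
  obtain ⟨hQ₁', hE₁⟩ := chain u₁ S Q α Hstep xs hmem σ₁ hQ₁
  obtain ⟨hQ₂', hE₂⟩ := chain u₁ S Q α Hstep xs hmem σ₂ hQ₂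
  have hend : u₁.subst (updL σ₁ α xs) = u₁.subst (updL σ₂ α xs) := by
    refine Tm.subst_congr_s6 u₁ (fun y hy => ?_)
    by_cases h : y ∈ xs
    · simp [updL, h]
    · have hyS : y ∈ S := by
        by_contra hyS
        exact h (List.mem_filter.2 ⟨List.mem_append_left _ hy, by simpa using hyS⟩)
      simp [updL, h, hagree y hyS]
  have h11 : Entails Eqs (u₁.subst σ₁) (u₁.subst σ₂) :=
    (hE₁.trans (hend ▸ Entails.refl Eqs _)).trans hE₂.symm
  exact ⟨h11, h11.trans (hpoint σ₂ hQ₂)⟩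

theorem holds_comp {Γ : Set (Tm F)} {μ τ : Subst F}
    (h : ∀ u ∈ substConstr Γ μ, u.subst τ ∈ M) :
    ∀ v ∈ Γ, v.subst (Subst.comp μ τ) ∈ M := by
  intro v hv
  rw [← Tm.subst_subst_s6]
  exact h _ ⟨v, hv, rfl⟩

end Layer3

section Layer4
variable {F : Type} {M : Set (Tm F)} {E : Set (Tm F × Tm F)}

theorem inv2_init {ar : F → ℕ} {α : Tm F} (hα : α ∈ M)
    (hPC : PiClosed M (initState ar E) α) :
    ∀ A ∈ initState ar E, Inv2 M E A := by
  intro A hA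
  rcases hA with ⟨p, hp, rfl⟩ | ⟨f, rfl⟩
  · -- equation class
    set c₁ : CTerm F := ⟨{p.1, p.2}, p.1⟩ with hc₁def
    set c₂ : CTerm F := ⟨{p.1, p.2}, p.2⟩ with hc₂def
    set A : CClass F := {c₁, c₂} with hAdef
    have hAmem : A ∈ initState ar E := Or.inl ⟨p, hp, rfl⟩
    have hsep : ∀ x, x ∈ p.1.varsList → x ∈ p.2.varsList → x ∈ sepVars A := by
      intro x h1 h2
      refine Set.mem_iInter₂.2 (fun ct hct => ?_)
      rcases hct with h | h
      · rw [h]; exact h1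
      · rw [h]; exact h2
    have hQupd : ∀ τ : Subst F, (p.1.subst τ ∈ M ∧ p.2.subst τ ∈ M) → ∀ x : ℕ,
        (p.1.subst (updL τ α [x]) ∈ M ∧ p.2.subst (updL τ α [x]) ∈ M) := by
      intro τ hQ x
      constructor
      · exact piClosed_updL hPC (occursIn_constr hAmem (show c₁ ∈ A from Or.inl rfl)
          (show p.1 ∈ ({p.1, p.2} : Set (Tm F)) from Or.inl rfl)) hQ.1 x
      · exact piClosed_updL hPC (occursIn_constr hAmem (show c₁ ∈ A from Or.inl rfl)
          (show p.2 ∈ ({p.1, p.2} : Set (Tm F)) from Or.inr rfl)) hQ.2 x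
    have hpoint : ∀ τ : Subst F, (p.1.subst τ ∈ M ∧ p.2.subst τ ∈ M) →
        Entails (gndM M E) (p.1.subst τ) (p.2.subst τ) := by
      intro τ hQ
      exact Entails.of_mem ⟨p, hp, τ, rfl, hQ.1, hQ.2⟩
    intro ct₁ h₁ ct₂ h₂ σ₁ σ₂ hag hs₁ hs₂
    have hQ : ∀ (ct : CTerm F), ct ∈ A → ∀ σ : Subst F,
        (∀ u ∈ CTerm.constr ct, u.subst σ ∈ M) → (p.1.subst σ ∈ M ∧ p.2.subst σ ∈ M) := by
      intro ct hct σ h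
      have hcon : CTerm.constr ct = {p.1, p.2} := by
        rcases hct with h' | h' <;> rw [h']
      exact ⟨h _ (by rw [hcon]; exact Or.inl rfl), h _ (by rw [hcon]; exact Or.inr rfl)⟩
    have hQ₁ := hQ ct₁ h₁ σ₁ hs₁
    have hQ₂ := hQ ct₂ h₂ σ₂ hs₂
    obtain ⟨h11, h12⟩ := twoTerm p.1 p.2 (sepVars A) _ α hsep hQupd hpoint σ₁ σ₂ hag hQ₁ hQ₂
    obtain ⟨h22, h21⟩ := twoTerm p.2 p.1 (sepVars A) _ α (fun x a b => hsep x b a) hQupd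
      (fun τ hQ => (hpoint τ hQ).symm) σ₁ σ₂ hag hQ₁ hQ₂
    have ht₁ : CTerm.term ct₁ = p.1 ∨ CTerm.term ct₁ = p.2 := by
      rcases h₁ with h | h <;> [exact Or.inl (by rw [h]); exact Or.inr (by rw [h])]
    have ht₂ : CTerm.term ct₂ = p.1 ∨ CTerm.term ct₂ = p.2 := by
      rcases h₂ with h | h <;> [exact Or.inl (by rw [h]); exact Or.inr (by rw [h])]
    rcases ht₁ with h | h <;> rw [h] <;> rcases ht₂ with h' | h' <;> rw [h']
    · exact h11
    · exact h12
    · exact h21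
    · exact h22
  · -- single term class
    intro ct₁ h₁ ct₂ h₂ σ₁ σ₂ hag hs₁ hs₂
    rw [singleTermClass, Set.mem_singleton_iff] at h₁ h₂
    have e : ct₂ = ct₁ := by rw [h₁, h₂]
    have : (CTerm.term ct₁).subst σ₁ = (CTerm.term ct₂).subst σ₂ := by
      rw [e]
      refine Tm.subst_congr_s6 _ (fun y hy => hag y ?_)
      refine Set.mem_iInter₂.2 (fun ct hct => ?_)
      rw [singleTermClass, Set.mem_singleton_iff] at hct
      rw [hct, ← h₁]
      exact hy
    rw [this]
    exact Entails.refl _ _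

end Layer4

section Layer5
variable {F : Type} {M : Set (Tm F)} {E : Set (Tm F × Tm F)}

theorem substConstr_union (Γ Δ : Set (Tm F)) (μ : Subst F) :
    substConstr (Γ ∪ Δ) μ = substConstr Γ μ ∪ substConstr Δ μ := Set.image_union _ _ _

theorem mem_substConstr {u : Tm F} {Γ : Set (Tm F)} {μ : Subst F} (h : u ∈ Γ) :
    u.subst μ ∈ substConstr Γ μ := ⟨u, h, rfl⟩

theorem inv2_merge {P'' : Set (CClass F)} {α : Tm F} (hα : α ∈ M)
    (hPC : PiClosed M P'' α)
    {A B C' : CClass F} {ρA ρB μ : Subst F} {ct₁ ct₂ : CTerm F}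
    (hInvA : Inv2 M E A) (hInvB : Inv2 M E B)
    (hρA : IsNormRenaming A ρA) (hρB : IsNormRenaming B ρB)
    (h1 : ct₁ ∈ A) (h2 : ct₂ ∈ B)
    (hunif : (CTerm.term ct₁).subst μ = (CTerm.term ct₂).subst μ)
    (hC' : C' = substClass (addConstr (normC A ρA) (ct₁.constr ∪ ct₂.constr) ∪
                             addConstr (normC B ρB) (ct₁.constr ∪ ct₂.constr)) μ)
    (hC'mem : C' ∈ P'') :
    Inv2 M E C' := by
  classical
  set Eqs := gndM M E with hEqs
  set K : Set (Tm F) := ct₁.constr ∪ ct₂.constr with hK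
  set t : Tm F := (CTerm.term ct₁).subst μ with ht
  set S : Set ℕ := sepVars C' with hS
  set Q : Subst F → Prop := fun τ =>
    (∀ u ∈ ct₁.constr, u.subst (Subst.comp μ τ) ∈ M) ∧
    (∀ u ∈ ct₂.constr, u.subst (Subst.comp μ τ) ∈ M) with hQ
  -- decomposition of elements of C'
  have helem : ∀ e ∈ C', ∃ (X : CClass F) (ρ : Subst F) (c : CTerm F),
      ((A = X ∧ ρA = ρ) ∨ (B = X ∧ ρB = ρ)) ∧ c ∈ X ∧
      CTerm.constr e = substConstr ((c.constr ∪ substConstr c.constr ρ) ∪ K) μ ∧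
      (CTerm.term e = (c.term.subst μ) ∨ CTerm.term e = ((c.term.subst ρ).subst μ)) := by
    intro e he
    rw [hC'] at he
    obtain ⟨ct, hct, rfl⟩ := he
    rcases hct with ⟨ctN, hctN, rfl⟩ | ⟨ctN, hctN, rfl⟩
    · obtain ⟨c, hcA, hcon, hterm⟩ := normC_elim hctN
      refine ⟨A, ρA, c, Or.inl ⟨rfl, rfl⟩, hcA,
        by show substConstr _ μ = _; rw [hcon], ?_⟩
      rcases hterm with h | h
      · exact Or.inl (by show Tm.subst μ _ = _; rw [h])
      · exact Or.inr (by show Tm.subst μ _ = _; rw [h])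
    · obtain ⟨c, hcB, hcon, hterm⟩ := normC_elim hctN
      refine ⟨B, ρB, c, Or.inr ⟨rfl, rfl⟩, hcB,
        by show substConstr _ μ = _; rw [hcon], ?_⟩
      rcases hterm with h | h
      · exact Or.inl (by show Tm.subst μ _ = _; rw [h])
      · exact Or.inr (by show Tm.subst μ _ = _; rw [h])
  -- a fixed element of C' whose constraint contains K μ
  have hwit : ∃ e₀ ∈ C', ∀ u ∈ K, u.subst μ ∈ CTerm.constr e₀ := by
    refine ⟨CTerm.subst ⟨(ct₁.constr ∪ substConstr ct₁.constr ρA) ∪ K, ct₁.term⟩ μ, ?_, ?_⟩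
    · rw [hC']
      refine ⟨_, Or.inl ⟨⟨ct₁.constr ∪ substConstr ct₁.constr ρA, ct₁.term⟩,
        Or.inl ⟨ct₁, h1, rfl⟩, rfl⟩, rfl⟩
    · intro u hu
      exact mem_substConstr (Or.inr hu)
  obtain ⟨e₀, he₀, he₀K⟩ := hwit
  -- Q is preserved by updates
  have hQupd : ∀ τ, Q τ → ∀ x : ℕ, Q (updL τ α [x]) := by
    intro τ hτ x
    constructor
    · intro u hu
      rw [← Tm.subst_subst_s6]
      exact piClosed_updL hPC (occursIn_constr hC'mem he₀ (he₀K u (Or.inl hu)))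
        (by rw [Tm.subst_subst_s6]; exact hτ.1 u hu) x
    · intro u hu
      rw [← Tm.subst_subst_s6]
      exact piClosed_updL hPC (occursIn_constr hC'mem he₀ (he₀K u (Or.inr hu)))
        (by rw [Tm.subst_subst_s6]; exact hτ.2 u hu) x
  -- relating an element of C' to the pivot t
  have side : ∀ (X : CClass F) (ρ : Subst F), IsNormRenaming X ρ → Inv2 M E X →
      ∀ cp ∈ X, ∀ c ∈ X, ∀ v : Tm F, (v = c.term ∨ v = c.term.subst ρ) →
      ∀ τ : Subst F,
      (∀ u ∈ substConstr ((c.constr ∪ substConstr c.constr ρ) ∪ K) μ, u.subst τ ∈ M) →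
      (∀ u ∈ cp.constr, u.subst (Subst.comp μ τ) ∈ M) →
      Entails Eqs ((v.subst μ).subst τ) ((cp.term.subst μ).subst τ) := by
    intro X ρ hρ hInv cp hcp c hc v hv τ hcon hcpcon
    have hall : ∀ u ∈ (c.constr ∪ substConstr c.constr ρ), u.subst (Subst.comp μ τ) ∈ M :=
      fun u hu => by
        rw [← Tm.subst_subst_s6]; exact hcon _ (mem_substConstr (Or.inl hu))
    rw [Tm.subst_subst_s6, Tm.subst_subst_s6]
    rcases hv with rfl | rfl
    · exact hInv c hc cp hcp _ _ (fun y _ => rfl) (fun u hu => hall u (Or.inl hu)) hcpcon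
    · rw [Tm.subst_subst_s6]
      refine hInv c hc cp hcp _ _ (fun y hy => ?_) (fun u hu => ?_) hcpcon
      · show (ρ y).subst (Subst.comp μ τ) = _
        rw [normRenaming_sep hρ hy, Tm.subst_var_s6]
      · rw [show u.subst (Subst.comp ρ (Subst.comp μ τ))
            = (u.subst ρ).subst (Subst.comp μ τ) from (Tm.subst_subst_s6 u ρ _).symm]
        exact hall _ (Or.inr (mem_substConstr hu))
  have elemEquiv : ∀ e ∈ C', ∀ τ : Subst F, (∀ u ∈ CTerm.constr e, u.subst τ ∈ M) →
      Entails Eqs ((CTerm.term e).subst τ) (t.subst τ) ∧ Q τ := by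
    intro e he τ hsat
    obtain ⟨X, ρ, c, hXρ, hcX, hcon, hterm⟩ := helem e he
    have hQτ : Q τ := by
      constructor
      · intro u hu
        rw [← Tm.subst_subst_s6]
        exact hsat _ (by rw [hcon]; exact mem_substConstr (Or.inr (Or.inl hu)))
      · intro u hu
        rw [← Tm.subst_subst_s6]
        exact hsat _ (by rw [hcon]; exact mem_substConstr (Or.inr (Or.inr hu)))
    refine ⟨?_, hQτ⟩
    have hcon' : ∀ u ∈ substConstr ((c.constr ∪ substConstr c.constr ρ) ∪ K) μ,
        u.subst τ ∈ M := fun u hu => hsat u (by rw [hcon]; exact hu)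
    rcases hXρ with ⟨rfl, rfl⟩ | ⟨rfl, rfl⟩
    · rcases hterm with h | h
      · rw [h]; exact side A ρA hρA hInvA ct₁ h1 c hcX c.term (Or.inl rfl) τ hcon' hQτ.1
      · rw [h]
        exact side A ρA hρA hInvA ct₁ h1 c hcX (c.term.subst ρA) (Or.inr rfl) τ hcon' hQτ.1
    · rcases hterm with h | h
      · rw [h]
        have := side B ρB hρB hInvB ct₂ h2 c hcX c.term (Or.inl rfl) τ hcon' hQτ.2
        rw [← hunif] at this; exact this
      · rw [h]
        have := side B ρB hρB hInvB ct₂ h2 c hcX (c.term.subst ρB) (Or.inr rfl) τ hcon' hQτ.2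
        rw [← hunif] at this; exact this
  -- the chain step
  have Hstep : ∀ τ, Q τ → ∀ x, x ∉ S →
      Q (updL τ α [x]) ∧ Entails Eqs (t.subst τ) (t.subst (updL τ α [x])) := by
    intro τ hτ x hx
    refine ⟨hQupd τ hτ x, ?_⟩
    by_cases hA' : ∀ y ∈ sepVars A, x ∉ (μ y).varsList
    · -- route through A
      have hgoal : Entails Eqs (ct₁.term.subst (Subst.comp μ τ))
          (ct₁.term.subst (Subst.comp μ (updL τ α [x]))) := by
        refine hInvA ct₁ h1 ct₁ h1 _ _ (fun y hy => ?_) hτ.1 (hQupd τ hτ x).1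
        show (μ y).subst τ = (μ y).subst (updL τ α [x])
        refine Tm.subst_congr_s6 _ (fun z hz => ?_)
        have : z ≠ x := fun h => hA' y hy (h ▸ hz)
        simp [updL, this]
      rw [← Tm.subst_subst_s6, ← Tm.subst_subst_s6] at hgoal
      exact hgoal
    · push_neg at hA'
      obtain ⟨y₀, hy₀, hy₀x⟩ := hA'
      have hB' : ∀ z ∈ sepVars B, x ∉ (μ z).varsList := by
        by_contra hB'
        push_neg at hB'
        obtain ⟨z₀, hz₀, hz₀x⟩ := hB'
        apply hx
        rw [hS]
        refine Set.mem_iInter₂.2 (fun e he => ?_)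
        obtain ⟨X, ρ, c, hXρ, hcX, -, hterm⟩ := helem e he
        have key : ∀ (w : ℕ), w ∈ sepVars X → x ∈ (μ w).varsList →
            IsNormRenaming X ρ → x ∈ (CTerm.term e).varsIn := by
          intro w hw hwx hρ
          have hwc : w ∈ c.term.varsList := Set.mem_iInter₂.1 hw c hcX
          rcases hterm with h | h <;> rw [h]
          · exact Tm.mem_varsList_subst.2 ⟨w, hwc, hwx⟩
          · refine Tm.mem_varsList_subst.2 ⟨w, ?_, hwx⟩
            refine Tm.mem_varsList_subst.2 ⟨w, hwc, ?_⟩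
            rw [normRenaming_sep hρ hw, Tm.varsList_var_s6]
            simp
        rcases hXρ with ⟨rfl, rfl⟩ | ⟨rfl, rfl⟩
        · exact key y₀ hy₀ hy₀x hρA
        · exact key z₀ hz₀ hz₀x hρB
      -- route through B
      have hgoal : Entails Eqs (ct₂.term.subst (Subst.comp μ τ))
          (ct₂.term.subst (Subst.comp μ (updL τ α [x]))) := by
        refine hInvB ct₂ h2 ct₂ h2 _ _ (fun y hy => ?_) hτ.2 (hQupd τ hτ x).2
        show (μ y).subst τ = (μ y).subst (updL τ α [x])
        refine Tm.subst_congr_s6 _ (fun z hz => ?_)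
        have : z ≠ x := fun h => hB' y hy (h ▸ hz)
        simp [updL, this]
      rw [← Tm.subst_subst_s6, ← Tm.subst_subst_s6, ← hunif] at hgoal
      exact hgoal
  -- final assembly
  intro e₁ he₁ e₂ he₂ τ₁ τ₂ hag hs₁ hs₂
  obtain ⟨hE₁, hQ₁⟩ := elemEquiv e₁ he₁ τ₁ hs₁
  obtain ⟨hE₂, hQ₂⟩ := elemEquiv e₂ he₂ τ₂ hs₂
  set xs : List ℕ := t.varsList.filter (fun y => decide (y ∉ S)) with hxs
  have hmem : ∀ x ∈ xs, x ∉ S := fun x hx => by simpa using List.of_mem_filter hx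
  obtain ⟨-, hch₁⟩ := chain t S Q α Hstep xs hmem τ₁ hQ₁
  obtain ⟨-, hch₂⟩ := chain t S Q α Hstep xs hmem τ₂ hQ₂
  have hend : t.subst (updL τ₁ α xs) = t.subst (updL τ₂ α xs) := by
    refine Tm.subst_congr_s6 _ (fun y hy => ?_)
    by_cases h : y ∈ xs
    · simp [updL, h]
    · have hyS : y ∈ S := by
        by_contra hyS
        exact h (List.mem_filter.2 ⟨hy, by simpa using hyS⟩)
      simp [updL, h, hag y hyS]
  exact hE₁.trans ((hch₁.trans (hend ▸ Entails.refl Eqs _)).trans (hch₂.symm.trans hE₂.symm))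

end Layer5

section Layer6
variable {F : Type} {M : Set (Tm F)} {E : Set (Tm F × Tm F)}

theorem inv2_deduction {P'' : Set (CClass F)} {α : Tm F} (hα : α ∈ M)
    (hPC : PiClosed M P'' α) (f : F)
    (ss ts ss' ts' : List (Tm F)) (Γ Δ : Set (Tm F)) (Γs Δs : List (Set (Tm F))) (μ : Subst F)
    {C' : CClass F}
    (hl1 : ss'.length = ss.length) (hl2 : ts'.length = ss.length)
    (hl4 : Γs.length = ss.length) (hl5 : Δs.length = ss.length)
    (hside : ∀ i < ss.length, ∃ (D : CClass F) (ρ : Subst F), Inv2 M E D ∧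
        IsNormRenaming D ρ ∧
        (⟨Γs[i]!, ss'[i]!⟩ : CTerm F) ∈ normC D ρ ∧ (⟨Δs[i]!, ts'[i]!⟩ : CTerm F) ∈ normC D ρ)
    (hC' : C' = substClass
        ({⟨Γ ∪ Δ ∪ ⋃₀ {G | G ∈ Γs} ∪ ⋃₀ {G | G ∈ Δs}, Tm.app f ss'⟩,
          ⟨Γ ∪ Δ ∪ ⋃₀ {G | G ∈ Γs} ∪ ⋃₀ {G | G ∈ Δs}, Tm.app f ts'⟩} : CClass F) μ)
    (hC'mem : C' ∈ P'') :
    Inv2 M E C' := by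
  classical
  set Eqs := gndM M E with hEqs
  set Θ : Set (Tm F) := Γ ∪ Δ ∪ ⋃₀ {G | G ∈ Γs} ∪ ⋃₀ {G | G ∈ Δs} with hΘ
  set u₁ : Tm F := (Tm.app f ss').subst μ with hu₁
  set u₂ : Tm F := (Tm.app f ts').subst μ with hu₂
  set S : Set ℕ := sepVars C' with hS
  set Q : Subst F → Prop := fun τ => ∀ u ∈ Θ, u.subst (Subst.comp μ τ) ∈ M with hQdef
  have hc1mem : (CTerm.subst ⟨Θ, Tm.app f ss'⟩ μ) ∈ C' := by
    rw [hC']; exact ⟨_, Or.inl rfl, rfl⟩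
  have hc2mem : (CTerm.subst ⟨Θ, Tm.app f ts'⟩ μ) ∈ C' := by
    rw [hC']; exact ⟨_, Or.inr rfl, rfl⟩
  have helem : ∀ e ∈ C', CTerm.constr e = substConstr Θ μ ∧
      (CTerm.term e = u₁ ∨ CTerm.term e = u₂) := by
    intro e he
    rw [hC'] at he
    obtain ⟨c, hc, rfl⟩ := he
    rcases hc with h | h
    · rw [h]; exact ⟨rfl, Or.inl rfl⟩
    · rw [h]; exact ⟨rfl, Or.inr rfl⟩
  have hQupd : ∀ τ, Q τ → ∀ x : ℕ, Q (updL τ α [x]) := by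
    intro τ hτ x u hu
    rw [← Tm.subst_subst_s6]
    exact piClosed_updL hPC (occursIn_constr hC'mem hc1mem (mem_substConstr hu))
      (by rw [Tm.subst_subst_s6]; exact hτ u hu) x
  have hΓsub : ∀ i, i < ss.length → Γs[i]! ⊆ Θ := by
    intro i hi u hu
    refine Or.inl (Or.inr ?_)
    exact ⟨Γs[i]!, by
      rw [getElem!_pos Γs i (by omega)]
      exact List.getElem_mem _, hu⟩
  have hΔsub : ∀ i, i < ss.length → Δs[i]! ⊆ Θ := by
    intro i hi u hu
    refine Or.inr ?_
    exact ⟨Δs[i]!, by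
      rw [getElem!_pos Δs i (by omega)]
      exact List.getElem_mem _, hu⟩
  have hpoint : ∀ τ, Q τ → Entails Eqs (u₁.subst τ) (u₂.subst τ) := by
    intro τ hτ
    have e1 : u₁.subst τ = Tm.app f (ss'.map (·.subst (Subst.comp μ τ))) := by
      rw [hu₁, Tm.subst_subst_s6, Tm.subst_app_s6]
    have e2 : u₂.subst τ = Tm.app f (ts'.map (·.subst (Subst.comp μ τ))) := by
      rw [hu₂, Tm.subst_subst_s6, Tm.subst_app_s6]
    rw [e1, e2]
    refine Entails.app f (by simp [hl1, hl2]) (fun i hi => ?_)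
    simp only [List.length_map] at hi
    have hi' : i < ss.length := by omega
    obtain ⟨D, ρ, hInvD, hρ, hmem1, hmem2⟩ := hside i hi'
    have key := inv2_norm hInvD hρ hmem1 hmem2 (Subst.comp μ τ)
      (fun u hu => hτ u (hΓsub i hi' hu)) (fun u hu => hτ u (hΔsub i hi' hu))
    have g1 : (ss'.map (·.subst (Subst.comp μ τ)))[i] = (ss'[i]!).subst (Subst.comp μ τ) := by
      rw [List.getElem_map, getElem!_pos ss' i hi]
    have g2 : (ts'.map (·.subst (Subst.comp μ τ)))[i]! = (ts'[i]!).subst (Subst.comp μ τ) := by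
      rw [getElem!_pos _ i (by simp; omega), List.getElem_map,
        getElem!_pos ts' i (by omega)]
    rw [g1, g2]
    exact key
  have hsep : ∀ x, x ∈ u₁.varsList → x ∈ u₂.varsList → x ∈ S := by
    intro x h1 h2
    refine Set.mem_iInter₂.2 (fun e he => ?_)
    rcases (helem e he).2 with h | h <;> rw [h]
    · exact h1
    · exact h2
  intro e₁ he₁ e₂ he₂ τ₁ τ₂ hag hs₁ hs₂
  have hQ₁ : Q τ₁ := by
    intro u hu
    rw [← Tm.subst_subst_s6]
    exact hs₁ _ (by rw [(helem e₁ he₁).1]; exact mem_substConstr hu)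
  have hQ₂ : Q τ₂ := by
    intro u hu
    rw [← Tm.subst_subst_s6]
    exact hs₂ _ (by rw [(helem e₂ he₂).1]; exact mem_substConstr hu)
  obtain ⟨h11, h12⟩ := twoTerm u₁ u₂ S Q α hsep hQupd hpoint τ₁ τ₂ hag hQ₁ hQ₂
  obtain ⟨h22, h21⟩ := twoTerm u₂ u₁ S Q α (fun x a b => hsep x b a) hQupd
    (fun τ hτ => (hpoint τ hτ).symm) τ₁ τ₂ hag hQ₁ hQ₂
  rcases (helem e₁ he₁).2 with h | h <;> rw [h] <;>
    rcases (helem e₂ he₂).2 with h' | h' <;> rw [h']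
  · exact h11
  · exact h12
  · exact h21
  · exact h22

end Layer6

/-- Soundness of CC(X). -/
theorem ccx_sound {F : Type} [Fintype F] [Nonempty F] (ar : F → ℕ)
    (M : Set (Tm F)) (hMfin : M.Finite) (hMg : ∀ t ∈ M, t.Ground)
    (E : Set (Tm F × Tm F)) (hEfin : E.Finite)
    (hEg : ∀ p ∈ E, ∃ σ : Subst F, Tm.subst σ p.1 ∈ M ∧ Tm.subst σ p.2 ∈ M)
    (hclosed : ∀ P', Relation.ReflTransGen (Step M) (initState ar E) P' →
        ∃ α ∈ M, PiClosed M P' α) :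
    ∀ P', Relation.ReflTransGen (Step M) (initState ar E) P' →
      ∀ A ∈ P', ∀ ρ : Subst F, IsNormRenaming A ρ →
        ∀ ct₁ ∈ normC A ρ, ∀ ct₂ ∈ normC A ρ, ∀ σ : Subst F,
          ((CTerm.term ct₁).subst σ).Ground → ((CTerm.term ct₂).subst σ).Ground →
          (∀ u ∈ CTerm.constr ct₁, (u.subst σ).Ground) →
          (∀ u ∈ CTerm.constr ct₂, (u.subst σ).Ground) →
          ConstrSat M (substConstr (CTerm.constr ct₁) σ) →
          ConstrSat M (substConstr (CTerm.constr ct₂) σ) →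
          Entails (gndM M E) ((CTerm.term ct₁).subst σ) ((CTerm.term ct₂).subst σ) := by
  have main : ∀ P', Relation.ReflTransGen (Step M) (initState ar E) P' →
      ∀ A ∈ P', Inv2 M E A := by
    intro P' hrun
    induction hrun with
    | refl =>
        obtain ⟨α, hα, hPC⟩ := hclosed _ Relation.ReflTransGen.refl
        exact inv2_init hα hPC
    | tail hab hbc ih =>
        have hreach := Relation.ReflTransGen.tail hab hbc
        obtain ⟨α, hα, hPC⟩ := hclosed _ hreach
        cases hbc with
        | merge A B C' ρA ρB μ ct₁ ct₂ hA hB hρA hρB h1 h2 hmgu hC'eq hnsub =>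
            intro A' hA'
            rcases Set.mem_insert_iff.1 hA' with rfl | hA'
            · exact inv2_merge hα hPC (ih A hA) (ih B hB) hρA hρB h1 h2 hmgu.1 hC'eq
                (Set.mem_insert _ _)
            · exact ih A' hA'
        | deduction A B C' f ss ts ss' ts' Γ Δ Γs Δs μ hA hB h1 h2 hl1 hl2 hl3 hl4 hl5
            hside hmgu hC'eq hnsub =>
            intro A' hA'
            rcases Set.mem_insert_iff.1 hA' with rfl | hA'
            · refine inv2_deduction hα hPC f ss ts ss' ts' Γ Δ Γs Δs μ hl1 hl2 hl4 hl5
                (fun i hi => ?_) hC'eq (Set.mem_insert _ _)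
              obtain ⟨D, hD, ρ, hρ, m1, m2⟩ := hside i hi
              exact ⟨D, ρ, ih D hD, hρ, m1, m2⟩
            · exact ih A' hA'
        | subsump A B hA hB hne hsub =>
            intro A' hA'
            exact ih A' hA'.1
  intro P' hrun A hA ρ hρ ct₁ h₁ ct₂ h₂ σ hg1 hg2 hgc1 hgc2 hsat1 hsat2
  have hc : ∀ (ct : CTerm F), (∀ u ∈ CTerm.constr ct, (u.subst σ).Ground) →
      ConstrSat M (substConstr (CTerm.constr ct) σ) →
      ∀ u ∈ CTerm.constr ct, u.subst σ ∈ M := by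
    intro ct hg hsat u hu
    obtain ⟨δ, hδ⟩ := hsat
    have h1 : (u.subst σ).subst δ ∈ M := hδ (mem_substConstr (mem_substConstr hu))
    rwa [Tm.ground_subst_s6 (hg u hu) δ] at h1
  exact inv2_norm (main P' hrun A hA) hρ h₁ h₂ σ (hc ct₁ hgc1 hsat1) (hc ct₂ hgc2 hsat2)

end NGCC
end
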